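/- arXiv:2412.06514 — 2 statements merged into one kernel-verified Lean document; each statement's English description precedes it below -/
import Mathlib

section
/- Let ρ > 0, μ ≥ 0 and λ ∈ ℝ with λ + 2μ > 0, set c_p = √((λ+2μ)/ρ), let n ∈ ℝ³ be a unit vector, and let f : ℝ → ℝ be continuously differentiable. For the outgoing plane P-wave u(x,t) = f(t − (n·x)/c_p) n, the first-order Clayton–Engquist absorbing boundary condition with outward normal n is satisfied exactly with zero data: σ(u)·n + D ∂u/∂t = 0 at every point of ℝ³ × ℝ. -/
/-- Partial derivative of a scalar field on `ℝᵈ` in coordinate direction `i`. -/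
noncomputable def pd {d : ℕ} (f : (Fin d → ℝ) → ℝ) (i : Fin d) (x : Fin d → ℝ) : ℝ :=
  fderiv ℝ f x (Pi.single i 1)

/-- Isotropic stress tensor `σ(U) = λ (∇·U) I + 2 μ ε(U)` of a displacement field `U`,
where `ε(U) = (∇U + (∇U)ᵀ)/2` is the linearized strain. -/
noncomputable def stress {d : ℕ} (lam mu : ℝ) (U : (Fin d → ℝ) → Fin d → ℝ)
    (i j : Fin d) (x : Fin d → ℝ) : ℝ :=
  lam * (∑ k, pd (fun y => U y k) k x) * (if i = j then (1 : ℝ) else 0)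
    + mu * (pd (fun y => U y i) j x + pd (fun y => U y j) i x)

/-- Clayton–Engquist absorbing-boundary weight `D = √(ρ(λ+2μ)) n nᵀ + √(ρμ) (I − n nᵀ)`. -/
noncomputable def ceWeight {d : ℕ} (ρ lam mu : ℝ) (n : Fin d → ℝ) (i j : Fin d) : ℝ :=
  Real.sqrt (ρ * (lam + 2 * mu)) * (n i * n j)
    + Real.sqrt (ρ * mu) * ((if i = j then (1 : ℝ) else 0) - n i * n j)

lemma pd_helper (cp : ℝ) (n : Fin 3 → ℝ) (f : ℝ → ℝ) (hf : ContDiff ℝ 1 f)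
    (t c : ℝ) (x : Fin 3 → ℝ) (j : Fin 3) :
    pd (fun y : Fin 3 → ℝ => f (t - (∑ m, n m * y m) / cp) * c) j x
      = c * (deriv f (t - (∑ m, n m * x m) / cp) * (-(cp⁻¹ * n j))) := by
  set S : (Fin 3 → ℝ) →L[ℝ] ℝ := ∑ m, (n m) • (ContinuousLinearMap.proj m) with hS
  have hSapp : ∀ y : Fin 3 → ℝ, S y = ∑ m, n m * y m := by
    intro y
    simp [hS, ContinuousLinearMap.sum_apply]
  have hkey : (fun y : Fin 3 → ℝ => ∑ m, n m * y m) = ⇑S := funext fun y => (hSapp y).symm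
  have hSf : HasFDerivAt (fun y : Fin 3 → ℝ => ∑ m, n m * y m) S x := by
    rw [hkey]; exact S.hasFDerivAt
  have hg : HasFDerivAt (fun y : Fin 3 → ℝ => t - (∑ m, n m * y m) / cp)
      ((0 : (Fin 3 → ℝ) →L[ℝ] ℝ) - cp⁻¹ • S) x := by
    simpa [div_eq_mul_inv] using (hSf.mul_const cp⁻¹).const_sub t
  set θ := t - (∑ m, n m * x m) / cp with hθ
  have hfd : HasDerivAt f (deriv f θ) θ :=
    ((hf.differentiable one_ne_zero) θ).hasDerivAt
  have hcomp : HasFDerivAt (fun y : Fin 3 → ℝ => f (t - (∑ m, n m * y m) / cp) * c)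
      (c • deriv f θ • ((0 : (Fin 3 → ℝ) →L[ℝ] ℝ) - cp⁻¹ • S)) x :=
    (hfd.comp_hasFDerivAt x hg).mul_const c
  rw [pd, hcomp.fderiv]
  simp [hSapp, Pi.single_apply, mul_ite, Finset.mul_sum, div_eq_mul_inv]

lemma deriv_helper (f : ℝ → ℝ) (hf : ContDiff ℝ 1 f) (c nj t : ℝ) :
    deriv (fun s => f (s - c) * nj) t = deriv f (t - c) * nj := by
  have h : HasDerivAt (fun s => f (s - c) * nj) (deriv f (t - c) * 1 * nj) t :=
    (((hf.differentiable one_ne_zero) (t - c)).hasDerivAt.comp t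
      ((hasDerivAt_id t).sub_const c)).mul_const nj
  simpa using h.deriv

/-- An outgoing plane P-wave `u(x,t) = f(t − (n·x)/c_p) n` satisfies the first-order
Clayton–Engquist absorbing boundary condition `σ(u)·n + D ∂u/∂t = 0` exactly, with outward
normal `n`, at every point of `ℝ³ × ℝ`. -/
theorem plane_p_wave_absorbing_bc (ρ lam mu : ℝ) (hρ : 0 < ρ) (hmu : 0 ≤ mu)
    (hlm : 0 < lam + 2 * mu)
    (cp : ℝ) (hcp : cp = Real.sqrt ((lam + 2 * mu) / ρ))
    (n : Fin 3 → ℝ) (hn : ∑ i, n i ^ 2 = 1)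
    (f : ℝ → ℝ) (hf : ContDiff ℝ 1 f) :
    ∀ (x : Fin 3 → ℝ) (t : ℝ) (i : Fin 3),
      (∑ j, stress lam mu (fun y k => f (t - (∑ m, n m * y m) / cp) * n k) i j x * n j)
        + (∑ j, ceWeight ρ lam mu n i j *
            deriv (fun s => f (s - (∑ m, n m * x m) / cp) * n j) t) = 0 := by
  intro x t i
  have hcp0 : 0 < cp := by
    rw [hcp]; exact Real.sqrt_pos.mpr (div_pos hlm hρ)
  have hcpne : cp ≠ 0 := ne_of_gt hcp0
  have hs : Real.sqrt (ρ * (lam + 2 * mu)) * cp = lam + 2 * mu := by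
    rw [hcp, ← Real.sqrt_mul (by positivity)]
    rw [show ρ * (lam + 2 * mu) * ((lam + 2 * mu) / ρ) = (lam + 2 * mu) ^ 2 by
      field_simp]
    exact Real.sqrt_sq hlm.le
  simp only [stress, ceWeight, pd_helper cp n f hf t, deriv_helper f hf]
  have hs' : Real.sqrt (ρ * (lam + 2 * mu)) = (lam + 2 * mu) / cp := by
    rw [eq_div_iff hcpne]; exact hs
  rw [Fin.sum_univ_three] at hn
  rw [hs']
  fin_cases i
  · simp only [Fin.sum_univ_three]; norm_num [Fin.ext_iff]
    linear_combination (-(deriv f (t - (n 0 * x 0 + n 1 * x 1 + n 2 * x 2) / cp) * n 0 * Real.sqrt (ρ * mu))) * hn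
  · simp only [Fin.sum_univ_three]; norm_num [Fin.ext_iff]
    linear_combination (-(deriv f (t - (n 0 * x 0 + n 1 * x 1 + n 2 * x 2) / cp) * n 1 * Real.sqrt (ρ * mu))) * hn
  · simp only [Fin.sum_univ_three, show (⟨2, by omega⟩ : Fin 3) = (2 : Fin 3) from rfl]
    norm_num [Fin.ext_iff]
    linear_combination (-(deriv f (t - (n 0 * x 0 + n 1 * x 1 + n 2 * x 2) / cp) * n 2 * Real.sqrt (ρ * mu))) * hn
end

section
/- Let ρ > 0, μ > 0 and λ ∈ ℝ with λ + 2μ > 0, set c_s = √(μ/ρ), let n, d ∈ ℝ³ be unit vectors with d·n = 0, and let f : ℝ → ℝ be continuously differentiable. For the outgoing plane S-wave u(x,t) = f(t − (n·x)/c_s) d, the first-order Clayton–Engquist absorbing boundary condition with outward normal n is satisfied exactly with zero data: σ(u)·n + D ∂u/∂t = 0 at every point of ℝ³ × ℝ. -/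
lemma pd_plane (f : ℝ → ℝ) (hf : Differentiable ℝ f) (cs : ℝ) (hcs : cs ≠ 0)
    (n : Fin 3 → ℝ) (t c : ℝ) (x : Fin 3 → ℝ) (j : Fin 3) :
    pd (fun y => f (t - (∑ m, n m * y m) / cs) * c) j x
      = deriv f (t - (∑ m, n m * x m) / cs) * c * (-(n j) / cs) := by
  have hG : HasFDerivAt (fun y : Fin 3 → ℝ => ∑ m, n m * y m)
      (∑ m, n m • (ContinuousLinearMap.proj m : (Fin 3 → ℝ) →L[ℝ] ℝ)) x := by
    apply HasFDerivAt.fun_sum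
    intro m _
    exact ((hasFDerivAt_apply m x).const_mul (n m))
  set s₀ := ∑ m, n m * x m with hs₀
  have hh : HasDerivAt (fun s : ℝ => f (t - s / cs))
      (deriv f (t - s₀ / cs) * (-cs⁻¹)) s₀ := by
    have h1 : HasDerivAt (fun s : ℝ => t - s / cs) (-cs⁻¹) s₀ := by
      simpa using ((hasDerivAt_id s₀).div_const cs).const_sub t
    exact ((hf (t - s₀ / cs)).hasDerivAt).comp s₀ h1
  have hcomp := (hh.comp_hasFDerivAt x hG).mul_const c
  have key := hcomp.fderiv
  simp only [Function.comp] at key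
  rw [pd, key]
  simp only [ContinuousLinearMap.coe_smul', Pi.smul_apply,
    ContinuousLinearMap.smul_apply, ContinuousLinearMap.sum_apply,
    ContinuousLinearMap.proj_apply, smul_eq_mul]
  have : (∑ m, n m * (Pi.single j 1 : Fin 3 → ℝ) m) = n j := by
    simp [Pi.single_apply, mul_ite, Finset.sum_ite_eq']
  rw [this]
  ring

/-- An outgoing plane S-wave `u(x,t) = f(t − (n·x)/c_s) d`, with unit polarization `d ⊥ n`,
satisfies the first-order Clayton–Engquist absorbing boundary condition
`σ(u)·n + D ∂u/∂t = 0` exactly, with outward normal `n`, at every point of `ℝ³ × ℝ`. -/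
theorem plane_s_wave_absorbing_bc (ρ lam mu : ℝ) (hρ : 0 < ρ) (hmu : 0 < mu)
    (hlm : 0 < lam + 2 * mu)
    (cs : ℝ) (hcs : cs = Real.sqrt (mu / ρ))
    (n d : Fin 3 → ℝ) (hn : ∑ i, n i ^ 2 = 1) (hd : ∑ i, d i ^ 2 = 1)
    (hdn : ∑ i, d i * n i = 0)
    (f : ℝ → ℝ) (hf : ContDiff ℝ 1 f) :
    ∀ (x : Fin 3 → ℝ) (t : ℝ) (i : Fin 3),
      (∑ j, stress lam mu (fun y k => f (t - (∑ m, n m * y m) / cs) * d k) i j x * n j)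
        + (∑ j, ceWeight ρ lam mu n i j *
            deriv (fun s => f (s - (∑ m, n m * x m) / cs) * d j) t) = 0 := by
  intro x t i
  have hf' : Differentiable ℝ f := hf.differentiable one_ne_zero
  have hcs0 : 0 < cs := by
    rw [hcs]; exact Real.sqrt_pos.mpr (div_pos hmu hρ)
  have hkey : cs * Real.sqrt (ρ * mu) = mu := by
    rw [hcs, ← Real.sqrt_mul (le_of_lt (div_pos hmu hρ))]
    rw [show mu / ρ * (ρ * mu) = mu ^ 2 by field_simp]
    exact Real.sqrt_sq hmu.le
  set c0 := (∑ m, n m * x m) / cs with hc0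
  set F := deriv f (t - c0) with hF
  have hpd : ∀ (c : ℝ) (j : Fin 3),
      pd (fun y => f (t - (∑ m, n m * y m) / cs) * c) j x = F * c * (-(n j) / cs) :=
    fun c j => pd_plane f hf' cs hcs0.ne' n t c x j
  have hderiv : ∀ j : Fin 3,
      deriv (fun s => f (s - (∑ m, n m * x m) / cs) * d j) t = F * d j := by
    intro j
    have h1 : HasDerivAt (fun s => f (s - (∑ m, n m * x m) / cs)) F t := by
      have := (hf' (t - c0)).hasDerivAt.comp t ((hasDerivAt_id t).sub_const c0)
      simpa [hc0, hF, Function.comp_def] using this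
    exact (h1.mul_const (d j)).deriv
  simp only [stress, ceWeight]
  rw [← hc0] at hderiv
  simp only [hpd, hderiv]
  simp only [Fin.sum_univ_three]
  have hn' : n 0 ^ 2 + n 1 ^ 2 + n 2 ^ 2 = 1 := by rw [← hn, Fin.sum_univ_three]
  have hdn' : d 0 * n 0 + d 1 * n 1 + d 2 * n 2 = 0 := by rw [← hdn, Fin.sum_univ_three]
  have hkey' : Real.sqrt (ρ*mu) = mu * cs⁻¹ := by
    rw [eq_mul_inv_iff_mul_eq₀ hcs0.ne', mul_comm]; exact hkey
  fin_cases i <;>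
    simp only [show (⟨0, by norm_num⟩ : Fin 3) = 0 from rfl,
      show (⟨1, by norm_num⟩ : Fin 3) = 1 from rfl,
      show (⟨2, by norm_num⟩ : Fin 3) = 2 from rfl] <;>
    norm_num [Fin.ext_iff] <;>
  [ (linear_combination (-(F)/cs*(lam* n 0 + mu * n 0)
      + (Real.sqrt (ρ*(lam+2*mu)) - Real.sqrt (ρ*mu)) * n 0 * F) * hdn'
      + (-mu*F*d 0/cs)*hn' + (F*d 0)*hkey');
    (linear_combination (-(F)/cs*(lam* n 1 + mu * n 1)
      + (Real.sqrt (ρ*(lam+2*mu)) - Real.sqrt (ρ*mu)) * n 1 * F) * hdn'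
      + (-mu*F*d 1/cs)*hn' + (F*d 1)*hkey');
    (linear_combination (-(F)/cs*(lam* n 2 + mu * n 2)
      + (Real.sqrt (ρ*(lam+2*mu)) - Real.sqrt (ρ*mu)) * n 2 * F) * hdn'
      + (-mu*F*d 2/cs)*hn' + (F*d 2)*hkey')]
end
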